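/- Let $N_1 > N_2 > 0$, $a_2 > a_1 > 1$ be reals, set $M = \dfrac{a_1}{\tfrac{1}{N_2} - \tfrac{1}{N_1}}$ and $E_0^* = \dfrac{-(M - N_2) + \sqrt{(M - N_2)^2 + 4 N_1 N_2}}{2}$, and define on $[0,\infty)$ the function $$f(E_0) = E_0 + N_1 \log\frac{a_1}{E_0/N_1 + 1} + N_2 \log\frac{a_2}{E_0\,(1/N_2 - 1/N_1) + a_1}.$$ Then for every real $L > 0$ and every $E_0 \in [0, L]$, $$f(E_0) \;\ge\; f\bigl(\min(L, E_0^*)\bigr);$$ that is, the minimum of $f$ over $[0,L]$ is attained at $\min(L, E_0^*)$. -/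

import Mathlib

set_option maxHeartbeats 1000000


/-- For the two-level staircase profile, the total energy
`f(E₀) = E₀ + N1 log (a1/(E₀/N1 + 1)) + N2 log (a2/(E₀(1/N2 - 1/N1) + a1))`
attains its minimum over `[0, L]` at `min L E0*`, where `E0*` is the unique
positive stationary point. -/
theorem min_total_energy_K2
    (N1 N2 a1 a2 : ℝ) (h12 : N2 < N1) (h2 : 0 < N2)
    (ha1 : 1 < a1) (ha12 : a1 < a2)
    (M : ℝ) (hM : M = a1 / (1 / N2 - 1 / N1))
    (E0s : ℝ)
    (hE0s : E0s = (-(M - N2) + Real.sqrt ((M - N2) ^ 2 + 4 * N1 * N2)) / 2)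
    (f : ℝ → ℝ)
    (hf : ∀ E0 : ℝ, f E0 = E0 + N1 * Real.log (a1 / (E0 / N1 + 1)) +
      N2 * Real.log (a2 / (E0 * (1 / N2 - 1 / N1) + a1))) :
    ∀ L : ℝ, 0 < L → ∀ E0 ∈ Set.Icc (0 : ℝ) L, f (min L E0s) ≤ f E0 := by
  have hN1 : (0:ℝ) < N1 := h2.trans h12
  set c : ℝ := 1 / N2 - 1 / N1 with hc_def
  have hc : 0 < c := by
    have : 1 / N1 < 1 / N2 := one_div_lt_one_div_of_lt h2 h12
    simpa [hc_def] using sub_pos.mpr this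
  have ha1pos : (0:ℝ) < a1 := lt_trans one_pos ha1
  have hMpos : 0 < M := by rw [hM]; exact div_pos ha1pos hc
  have hMc : M * c = a1 := by rw [hM]; field_simp
  -- radicand
  have hrad : (0:ℝ) ≤ (M - N2) ^ 2 + 4 * N1 * N2 := by positivity
  set s : ℝ := Real.sqrt ((M - N2) ^ 2 + 4 * N1 * N2) with hs_def
  have hs2 : s ^ 2 = (M - N2) ^ 2 + 4 * N1 * N2 := Real.sq_sqrt hrad
  have hs0 : 0 ≤ s := Real.sqrt_nonneg _
  have hE0s_pos : 0 < E0s := by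
    rw [hE0s]
    have h4 : 0 < 4 * N1 * N2 := by positivity
    nlinarith [hs2, hs0, sq_nonneg (s - (M - N2)), sq_nonneg (s + (M - N2))]
  have hq : E0s ^ 2 + (M - N2) * E0s - N1 * N2 = 0 := by
    rw [hE0s]; nlinarith [hs2]
  have hsum : 0 < E0s + (M - N2) := by
    rw [hE0s]
    have h4 : 0 < 4 * N1 * N2 := by positivity
    nlinarith [hs2, hs0]
  -- derivative
  have hfe : f = fun E0 => E0 + N1 * Real.log (a1 / (E0 / N1 + 1)) +
      N2 * Real.log (a2 / (E0 * c + a1)) := funext hf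
  have hder : ∀ x : ℝ, 0 ≤ x → HasDerivAt f (1 - N1 / (x + N1) - N2 / (x + M)) x := by
    intro x hx
    have hu : (0:ℝ) < x / N1 + 1 := by positivity
    have hv : (0:ℝ) < x * c + a1 := by positivity
    have h1 : HasDerivAt (fun E : ℝ => E / N1 + 1) (1 / N1) x := by
      simpa using ((hasDerivAt_id x).div_const N1).add_const 1
    have h2' : HasDerivAt (fun E : ℝ => a1 / (E / N1 + 1))
        ((0 * (x / N1 + 1) - a1 * (1 / N1)) / (x / N1 + 1) ^ 2) x :=
      (hasDerivAt_const x a1).div h1 hu.ne'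
    have h2l : HasDerivAt (fun E : ℝ => Real.log (a1 / (E / N1 + 1)))
        (((0 * (x / N1 + 1) - a1 * (1 / N1)) / (x / N1 + 1) ^ 2) / (a1 / (x / N1 + 1))) x :=
      h2'.log (by positivity)
    have h3 : HasDerivAt (fun E : ℝ => E * c + a1) c x := by
      simpa using ((hasDerivAt_id x).mul_const c).add_const a1
    have h4' : HasDerivAt (fun E : ℝ => a2 / (E * c + a1))
        ((0 * (x * c + a1) - a2 * c) / (x * c + a1) ^ 2) x :=
      (hasDerivAt_const x a2).div h3 hv.ne'
    have ha2pos : (0:ℝ) < a2 := lt_trans ha1pos ha12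
    have h4l : HasDerivAt (fun E : ℝ => Real.log (a2 / (E * c + a1)))
        (((0 * (x * c + a1) - a2 * c) / (x * c + a1) ^ 2) / (a2 / (x * c + a1))) x :=
      h4'.log (by positivity)
    have hxM : x + M = (x * c + a1) / c := by
      field_simp
      nlinarith [hMc]
    have htot := ((hasDerivAt_id x).add (h2l.const_mul N1)).add (h4l.const_mul N2)
    rw [hfe]
    refine htot.congr_deriv ?_
    symm
    rw [hxM]
    field_simp
    ring
  have hcont : ∀ x : ℝ, 0 ≤ x → ContinuousAt f x := fun x hx => (hder x hx).continuousAt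
  have hkey : ∀ x : ℝ, 0 ≤ x →
      (1 - N1 / (x + N1) - N2 / (x + M)) * ((x + N1) * (x + M))
        = (x - E0s) * (x + E0s + (M - N2)) := by
    intro x hx
    have hd1 : (0:ℝ) < x + N1 := by linarith
    have hd2 : (0:ℝ) < x + M := by linarith
    have h1 : (x + N1) ≠ 0 := hd1.ne'
    have h2 : (x + M) ≠ 0 := hd2.ne'
    have eA : N1 / (x + N1) * ((x + N1) * (x + M)) = N1 * (x + M) := by
      rw [← mul_assoc, div_mul_cancel₀ _ h1]
    have eB : N2 / (x + M) * ((x + N1) * (x + M)) = N2 * (x + N1) := by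
      rw [mul_comm (x + N1), ← mul_assoc, div_mul_cancel₀ _ h2]
    rw [sub_mul, sub_mul, one_mul, eA, eB]
    linear_combination hq
  have hderneg : ∀ x ∈ Set.Ioo (0:ℝ) E0s, deriv f x < 0 := by
    intro x hx
    rw [(hder x hx.1.le).deriv]
    have hd1 : (0:ℝ) < x + N1 := by linarith [hx.1]
    have hd2 : (0:ℝ) < x + M := by linarith [hx.1]
    have hneg : (x - E0s) * (x + E0s + (M - N2)) < 0 := by
      apply mul_neg_of_neg_of_pos (by linarith [hx.2])
      nlinarith [hsum, hx.1]
    nlinarith [hkey x hx.1.le, mul_pos hd1 hd2]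
  have hderpos : ∀ x : ℝ, E0s < x → 0 < deriv f x := by
    intro x hx
    have hx0 : 0 ≤ x := (hE0s_pos.trans hx).le
    rw [(hder x hx0).deriv]
    have hd1 : (0:ℝ) < x + N1 := by linarith
    have hd2 : (0:ℝ) < x + M := by linarith
    have hpos : 0 < (x - E0s) * (x + E0s + (M - N2)) := by
      apply mul_pos (by linarith)
      nlinarith [hsum, hx0]
    nlinarith [hkey x hx0, mul_pos hd1 hd2]
  have hanti : StrictAntiOn f (Set.Icc 0 E0s) := by
    apply strictAntiOn_of_deriv_neg (convex_Icc _ _)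
      (fun x hx => (hcont x hx.1).continuousWithinAt)
    rw [interior_Icc]
    exact hderneg
  intro L hL E0 hE0
  obtain ⟨hE0l, hE0r⟩ := hE0
  rcases le_or_gt E0s L with hcase | hcase
  · rw [min_eq_right hcase]
    rcases lt_trichotomy E0 E0s with h | h | h
    · exact (hanti ⟨hE0l, h.le⟩ ⟨hE0s_pos.le, le_rfl⟩ h).le
    · rw [h]
    · have hmono : StrictMonoOn f (Set.Icc E0s L) := by
        apply strictMonoOn_of_deriv_pos (convex_Icc _ _)
          (fun x hx => (hcont x (hE0s_pos.le.trans hx.1)).continuousWithinAt)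
        rw [interior_Icc]
        exact fun x hx => hderpos x hx.1
      exact (hmono ⟨le_rfl, hcase⟩ ⟨h.le, hE0r⟩ h).le
  · rw [min_eq_left hcase.le]
    rcases eq_or_lt_of_le hE0r with h | h
    · rw [h]
    · exact (hanti ⟨hE0l, (h.trans hcase).le⟩ ⟨hL.le, hcase.le⟩ h).le
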